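/- Suppose min_{j∈J} T_j > 1. Then no nonnegative solution of the within-host bacterial dynamics system whose total bacterial population N(0) = N_s(0)+N_m(0)+N_p(0)+N_{m.p}(0) is positive can converge to the bacteria-free stationary state E⁰ = (B₀, 0, 0, 0, 0) as t → ∞; that is, the stable set of {E⁰} contains no point with positive total bacterial population. -/

import Mathlib

open Filter Set Matrix

/-- Parameters of the within-host bacterial dynamics system:
`Lam` = Λ (nutrient inflow), `d` = nutrient washout rate, `ds,dm,dp,dmp` = death
rates `d_j`, `bs,bm,bp,bmp` = consumption rates `β_j`, `ts,tm,tp,tmp` = conversion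
factors `τ_j`, `es,em,ep,emp` = mutation ratios `ε_j`, `th` = segregation ratio θ,
`al` = HGT flux α, and `aH, bH` the Beddington–DeAngelis constants. -/
structure ModelParams where
  Lam : ℝ
  d : ℝ
  ds : ℝ
  dm : ℝ
  dp : ℝ
  dmp : ℝ
  bs : ℝ
  bm : ℝ
  bp : ℝ
  bmp : ℝ
  ts : ℝ
  tm : ℝ
  tp : ℝ
  tmp : ℝ
  es : ℝ
  em : ℝ
  ep : ℝ
  emp : ℝ
  th : ℝ
  al : ℝ
  aH : ℝ
  bH : ℝ

/-- Right-hand side of the ODE system, with state `x = (B, N_s, N_m, N_p, N_{m.p})`. -/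
noncomputable def rhs (p : ModelParams) (x : Fin 5 → ℝ) : Fin 5 → ℝ :=
  ![p.Lam - p.d * x 0 - x 0 * (p.bs * x 1 + p.bm * x 2 + p.bp * x 3 + p.bmp * x 4),
    p.ts * p.bs * (1 - p.es) * x 0 * x 1 - p.ds * x 1 + p.em * p.tm * p.bm * x 0 * x 2
      + p.th * p.tp * p.bp * x 0 * x 3
      - (p.al / (p.aH + p.bH * (x 1 + x 2 + x 3 + x 4))) * x 1 * (x 3 + x 4),
    p.tm * p.bm * (1 - p.em) * x 0 * x 2 - p.dm * x 2 + p.es * p.ts * p.bs * x 0 * x 1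
      + p.th * p.tmp * p.bmp * x 0 * x 4
      - (p.al / (p.aH + p.bH * (x 1 + x 2 + x 3 + x 4))) * x 2 * (x 3 + x 4),
    p.tp * p.bp * (1 - p.th) * (1 - p.ep) * x 0 * x 3 - p.dp * x 3
      + p.emp * (1 - p.th) * p.tmp * p.bmp * x 0 * x 4
      + (p.al / (p.aH + p.bH * (x 1 + x 2 + x 3 + x 4))) * x 1 * (x 3 + x 4),
    p.tmp * p.bmp * (1 - p.th) * (1 - p.emp) * x 0 * x 4 - p.dmp * x 4
      + p.ep * (1 - p.th) * p.tp * p.bp * x 0 * x 3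
      + (p.al / (p.aH + p.bH * (x 1 + x 2 + x 3 + x 4))) * x 2 * (x 3 + x 4)]

/-- Natural hypotheses on the parameters. -/
def ModelParams.Valid (p : ModelParams) : Prop :=
  0 < p.Lam ∧ 0 < p.d ∧ 0 < p.ds ∧ 0 < p.dm ∧ 0 < p.dp ∧ 0 < p.dmp ∧
  0 ≤ p.bs ∧ 0 ≤ p.bm ∧ 0 ≤ p.bp ∧ 0 ≤ p.bmp ∧
  0 ≤ p.ts ∧ 0 ≤ p.tm ∧ 0 ≤ p.tp ∧ 0 ≤ p.tmp ∧
  p.es ∈ Set.Ioo (0:ℝ) 1 ∧ p.em ∈ Set.Ioo (0:ℝ) 1 ∧ p.ep ∈ Set.Ioo (0:ℝ) 1 ∧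
  p.emp ∈ Set.Ioo (0:ℝ) 1 ∧ p.th ∈ Set.Ioo (0:ℝ) 1 ∧
  0 ≤ p.al ∧ 0 ≤ p.aH ∧ 0 ≤ p.bH ∧ 0 < p.aH + p.bH

/-- `x : ℝ → Fin 5 → ℝ` is a global-in-time (for `t ≥ 0`) solution of the system. -/
noncomputable def IsSolution (p : ModelParams) (x : ℝ → Fin 5 → ℝ) : Prop :=
  ∀ t : ℝ, 0 ≤ t → ∀ i : Fin 5, HasDerivAt (fun s => x s i) (rhs p (x t) i) t

/-- Total bacterial population. -/
noncomputable def Ntot (x : ℝ → Fin 5 → ℝ) (t : ℝ) : ℝ :=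
  x t 1 + x t 2 + x t 3 + x t 4

/-- Derivative of the total bacterial population. -/
noncomputable def Dtot (p : ModelParams) (x : ℝ → Fin 5 → ℝ) (t : ℝ) : ℝ :=
  (x t 0 * (p.ts * p.bs) - p.ds) * x t 1 + (x t 0 * (p.tm * p.bm) - p.dm) * x t 2
    + (x t 0 * (p.tp * p.bp) - p.dp) * x t 3 + (x t 0 * (p.tmp * p.bmp) - p.dmp) * x t 4

/-- Exponential lower bound (Gronwall type). -/
lemma exp_grow (f f' : ℝ → ℝ) (c a : ℝ)
    (hf : ∀ t, a ≤ t → HasDerivAt f (f' t) t)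
    (hge : ∀ t, a ≤ t → c * f t ≤ f' t) :
    ∀ t, a ≤ t → f a * Real.exp (c * (t - a)) ≤ f t := by
  intro t ht
  have hgd : ∀ s, a ≤ s → HasDerivAt (fun u => f u * Real.exp (-c * u))
      ((f' s - c * f s) * Real.exp (-c * s)) s := by
    intro s hs
    have he : HasDerivAt (fun u : ℝ => Real.exp (-c * u)) (Real.exp (-c * s) * (-c * 1)) s :=
      (HasDerivAt.const_mul (-c) (hasDerivAt_id s)).exp
    have h : HasDerivAt (fun u => f u * Real.exp (-c * u)) _ s := (hf s hs).mul he
    convert h using 1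
    ring
  have hmono : MonotoneOn (fun u => f u * Real.exp (-c * u)) (Set.Ici a) := by
    apply monotoneOn_of_deriv_nonneg (convex_Ici a)
    · intro s hs
      exact ((hgd s hs).continuousAt).continuousWithinAt
    · intro s hs
      rw [interior_Ici] at hs
      exact (hgd s (le_of_lt hs)).differentiableAt.differentiableWithinAt
    · intro s hs
      rw [interior_Ici] at hs
      rw [(hgd s (le_of_lt hs)).deriv]
      have h1 := hge s (le_of_lt hs)
      have h2 := Real.exp_pos (-c * s)
      nlinarith
  have h1 : f a * Real.exp (-c * a) ≤ f t * Real.exp (-c * t) :=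
    hmono (Set.mem_Ici.mpr le_rfl) ht ht
  have h2 := mul_le_mul_of_nonneg_right h1 (Real.exp_pos (c * t)).le
  have e1 : Real.exp (-c * a) * Real.exp (c * t) = Real.exp (c * (t - a)) := by
    rw [← Real.exp_add]; congr 1; ring
  have e2 : Real.exp (-c * t) * Real.exp (c * t) = 1 := by
    rw [← Real.exp_add, show -c * t + c * t = 0 by ring, Real.exp_zero]
  calc f a * Real.exp (c * (t - a)) = f a * Real.exp (-c * a) * Real.exp (c * t) := by
        rw [mul_assoc, e1]
    _ ≤ f t * Real.exp (-c * t) * Real.exp (c * t) := h2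
    _ = f t := by rw [mul_assoc, e2, mul_one]

set_option maxHeartbeats 1600000 in
/-- If `min_j T_j > 1`, then no nonnegative solution with
positive total initial bacterial population converges to the bacteria-free
stationary state `E⁰ = (B₀,0,0,0,0)`: the stable set of `E⁰` contains no point
with positive total bacterial population. -/
theorem stable_set_of_E0_avoids_X0
    (p : ModelParams) (hp : p.Valid)
    (B0 Tmin : ℝ) (hB0 : B0 = p.Lam / p.d)
    (hT : Tmin = min (min (B0 * p.ts * p.bs / p.ds) (B0 * p.tm * p.bm / p.dm))
                     (min (B0 * p.tp * p.bp / p.dp) (B0 * p.tmp * p.bmp / p.dmp)))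
    (hTgt : 1 < Tmin)
    (x : ℝ → Fin 5 → ℝ) (hx : IsSolution p x)
    (hnn : ∀ t : ℝ, 0 ≤ t → ∀ i, 0 ≤ x t i)
    (hN0 : 0 < x 0 1 + x 0 2 + x 0 3 + x 0 4) :
    ¬ Filter.Tendsto x Filter.atTop (nhds ![B0, 0, 0, 0, 0]) := by
  intro hlim
  obtain ⟨hLam, hd, hds, hdm, hdp, hdmp, hbs, hbm, hbp, hbmp, hts, htm, htp, htmp,
    hes, hem, hep, hemp, hth, hal, haH, hbH, haHbH⟩ := hp
  have hB0pos : 0 < B0 := by rw [hB0]; positivity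
  -- thresholds
  have hs1 : p.ds < B0 * (p.ts * p.bs) := by
    have hA : 1 < B0 * p.ts * p.bs / p.ds :=
      hTgt.trans_le (by rw [hT]; exact (min_le_left _ _).trans (min_le_left _ _))
    rw [← mul_assoc]; exact (one_lt_div hds).mp hA
  have hs2 : p.dm < B0 * (p.tm * p.bm) := by
    have hA : 1 < B0 * p.tm * p.bm / p.dm :=
      hTgt.trans_le (by rw [hT]; exact (min_le_left _ _).trans (min_le_right _ _))
    rw [← mul_assoc]; exact (one_lt_div hdm).mp hA
  have hs3 : p.dp < B0 * (p.tp * p.bp) := by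
    have hA : 1 < B0 * p.tp * p.bp / p.dp :=
      hTgt.trans_le (by rw [hT]; exact (min_le_right _ _).trans (min_le_left _ _))
    rw [← mul_assoc]; exact (one_lt_div hdp).mp hA
  have hs4 : p.dmp < B0 * (p.tmp * p.bmp) := by
    have hA : 1 < B0 * p.tmp * p.bmp / p.dmp :=
      hTgt.trans_le (by rw [hT]; exact (min_le_right _ _).trans (min_le_right _ _))
    rw [← mul_assoc]; exact (one_lt_div hdmp).mp hA
  have hcs : 0 < p.ts * p.bs := by
    by_contra h
    push_neg at h
    have := mul_nonpos_of_nonneg_of_nonpos hB0pos.le h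
    linarith
  have hcm : 0 < p.tm * p.bm := by
    by_contra h
    push_neg at h
    have := mul_nonpos_of_nonneg_of_nonpos hB0pos.le h
    linarith
  have hcp : 0 < p.tp * p.bp := by
    by_contra h
    push_neg at h
    have := mul_nonpos_of_nonneg_of_nonpos hB0pos.le h
    linarith
  have hcmp : 0 < p.tmp * p.bmp := by
    by_contra h
    push_neg at h
    have := mul_nonpos_of_nonneg_of_nonpos hB0pos.le h
    linarith
  set m : ℝ := min (min (B0 * (p.ts * p.bs) - p.ds) (B0 * (p.tm * p.bm) - p.dm))
      (min (B0 * (p.tp * p.bp) - p.dp) (B0 * (p.tmp * p.bmp) - p.dmp)) with hm_def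
  have hm : 0 < m :=
    lt_min (lt_min (by linarith) (by linarith)) (lt_min (by linarith) (by linarith))
  have hm1 : m ≤ B0 * (p.ts * p.bs) - p.ds := (min_le_left _ _).trans (min_le_left _ _)
  have hm2 : m ≤ B0 * (p.tm * p.bm) - p.dm := (min_le_left _ _).trans (min_le_right _ _)
  have hm3 : m ≤ B0 * (p.tp * p.bp) - p.dp := (min_le_right _ _).trans (min_le_left _ _)
  have hm4 : m ≤ B0 * (p.tmp * p.bmp) - p.dmp := (min_le_right _ _).trans (min_le_right _ _)
  set M : ℝ := max (max (p.ts * p.bs) (p.tm * p.bm)) (max (p.tp * p.bp) (p.tmp * p.bmp))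
    with hM_def
  have hM : 0 < M := hcs.trans_le ((le_max_left _ _).trans (le_max_left _ _))
  have hM1 : p.ts * p.bs ≤ M := (le_max_left _ _).trans (le_max_left _ _)
  have hM2 : p.tm * p.bm ≤ M := (le_max_right _ _).trans (le_max_left _ _)
  have hM3 : p.tp * p.bp ≤ M := (le_max_left _ _).trans (le_max_right _ _)
  have hM4 : p.tmp * p.bmp ≤ M := (le_max_right _ _).trans (le_max_right _ _)
  set K : ℝ := max (max p.ds p.dm) (max p.dp p.dmp) with hK_def
  have hK1 : p.ds ≤ K := (le_max_left _ _).trans (le_max_left _ _)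
  have hK2 : p.dm ≤ K := (le_max_right _ _).trans (le_max_left _ _)
  have hK3 : p.dp ≤ K := (le_max_left _ _).trans (le_max_right _ _)
  have hK4 : p.dmp ≤ K := (le_max_right _ _).trans (le_max_right _ _)
  set ε : ℝ := m / (2 * M) with hε_def
  have hε : 0 < ε := by positivity
  have hεM : ε * M = m / 2 := by
    rw [hε_def]; field_simp
  set c : ℝ := m / 2 with hc_def
  have hc : 0 < c := by positivity
  -- derivative of the total population
  have hND : ∀ t, 0 ≤ t → HasDerivAt (Ntot x) (Dtot p x t) t := by
    intro t ht
    have h := (((hx t ht 1).add (hx t ht 2)).add (hx t ht 3)).add (hx t ht 4)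
    have heq : rhs p (x t) 1 + rhs p (x t) 2 + rhs p (x t) 3 + rhs p (x t) 4
        = Dtot p x t := by
      simp only [rhs, Dtot, Matrix.cons_val_zero, Matrix.cons_val_one, Matrix.head_cons,
        Matrix.cons_val_two, Matrix.tail_cons, Matrix.cons_val_three, Matrix.cons_val_four]
      ring
    rw [heq] at h
    exact h
  -- crude lower bound, valid for all times
  have hKbd : ∀ t, 0 ≤ t → -K * Ntot x t ≤ Dtot p x t := by
    intro t ht
    have h0 := hnn t ht 0
    have h1 := hnn t ht 1
    have h2 := hnn t ht 2
    have h3 := hnn t ht 3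
    have h4 := hnn t ht 4
    have t1 : -K * x t 1 ≤ (x t 0 * (p.ts * p.bs) - p.ds) * x t 1 := by
      have w1 := mul_nonneg (mul_nonneg h0 hcs.le) h1
      have w2 := mul_nonneg (sub_nonneg.mpr hK1) h1
      linarith [w1, w2]
    have t2 : -K * x t 2 ≤ (x t 0 * (p.tm * p.bm) - p.dm) * x t 2 := by
      have w1 := mul_nonneg (mul_nonneg h0 hcm.le) h2
      have w2 := mul_nonneg (sub_nonneg.mpr hK2) h2
      linarith [w1, w2]
    have t3 : -K * x t 3 ≤ (x t 0 * (p.tp * p.bp) - p.dp) * x t 3 := by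
      have w1 := mul_nonneg (mul_nonneg h0 hcp.le) h3
      have w2 := mul_nonneg (sub_nonneg.mpr hK3) h3
      linarith [w1, w2]
    have t4 : -K * x t 4 ≤ (x t 0 * (p.tmp * p.bmp) - p.dmp) * x t 4 := by
      have w1 := mul_nonneg (mul_nonneg h0 hcmp.le) h4
      have w2 := mul_nonneg (sub_nonneg.mpr hK4) h4
      linarith [w1, w2]
    simp only [Ntot, Dtot]
    linarith
  -- positivity of the total population for all times
  have hpos : ∀ t, 0 ≤ t → 0 < Ntot x t := by
    intro t ht
    have hgr := exp_grow (Ntot x) (Dtot p x) (-K) 0 (fun s hs => hND s hs)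
      (fun s hs => hKbd s hs) t ht
    have h0 : 0 < Ntot x 0 := by simpa [Ntot] using hN0
    have hmp := mul_pos h0 (Real.exp_pos (-K * (t - 0)))
    linarith
  -- consequences of convergence
  have hcomp := tendsto_pi_nhds.mp hlim
  have hx0lim : Tendsto (fun t => x t 0) atTop (nhds B0) := by simpa using hcomp 0
  have hNlim : Tendsto (Ntot x) atTop (nhds 0) := by
    have h := (((hcomp 1).add (hcomp 2)).add (hcomp 3)).add (hcomp 4)
    simp at h; exact h
  have hev : ∀ᶠ t in atTop, B0 - ε < x t 0 :=
    hx0lim.eventually (eventually_gt_nhds (by linarith))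
  obtain ⟨T, hTev⟩ := Filter.eventually_atTop.mp hev
  set T' : ℝ := max T 0 with hT'_def
  have hT'0 : (0 : ℝ) ≤ T' := le_max_right _ _
  -- growth bound for large times
  have hgrow : ∀ t, T' ≤ t → c * Ntot x t ≤ Dtot p x t := by
    intro t ht
    have ht0 : 0 ≤ t := hT'0.trans ht
    have hx0ge : B0 - ε < x t 0 := hTev t ((le_max_left _ _).trans ht)
    have h1 := hnn t ht0 1
    have h2 := hnn t ht0 2
    have h3 := hnn t ht0 3
    have h4 := hnn t ht0 4
    have P1 : (0:ℝ) ≤ (x t 0 - (B0 - ε)) * (p.ts * p.bs) :=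
      mul_nonneg (by linarith) hcs.le
    have P2 : (0:ℝ) ≤ ε * (M - (p.ts * p.bs)) := mul_nonneg hε.le (by linarith)
    have hc1 : c ≤ x t 0 * (p.ts * p.bs) - p.ds := by linarith
    have Q1 : (0:ℝ) ≤ (x t 0 - (B0 - ε)) * (p.tm * p.bm) :=
      mul_nonneg (by linarith) hcm.le
    have Q2 : (0:ℝ) ≤ ε * (M - (p.tm * p.bm)) := mul_nonneg hε.le (by linarith)
    have hc2 : c ≤ x t 0 * (p.tm * p.bm) - p.dm := by linarith
    have R1 : (0:ℝ) ≤ (x t 0 - (B0 - ε)) * (p.tp * p.bp) :=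
      mul_nonneg (by linarith) hcp.le
    have R2 : (0:ℝ) ≤ ε * (M - (p.tp * p.bp)) := mul_nonneg hε.le (by linarith)
    have hc3 : c ≤ x t 0 * (p.tp * p.bp) - p.dp := by linarith
    have S1 : (0:ℝ) ≤ (x t 0 - (B0 - ε)) * (p.tmp * p.bmp) :=
      mul_nonneg (by linarith) hcmp.le
    have S2 : (0:ℝ) ≤ ε * (M - (p.tmp * p.bmp)) := mul_nonneg hε.le (by linarith)
    have hc4 : c ≤ x t 0 * (p.tmp * p.bmp) - p.dmp := by linarith
    have u1 := mul_le_mul_of_nonneg_right hc1 h1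
    have u2 := mul_le_mul_of_nonneg_right hc2 h2
    have u3 := mul_le_mul_of_nonneg_right hc3 h3
    have u4 := mul_le_mul_of_nonneg_right hc4 h4
    simp only [Ntot, Dtot]
    linarith [u1, u2, u3, u4]
  have hfin := exp_grow (Ntot x) (Dtot p x) c T' (fun s hs => hND s (hT'0.trans hs)) hgrow
  have hNT' : 0 < Ntot x T' := hpos T' hT'0
  have hevge : ∀ᶠ t in atTop, Ntot x T' ≤ Ntot x t := by
    filter_upwards [eventually_ge_atTop T'] with t ht
    have hle := hfin t ht
    have hexp : (1:ℝ) ≤ Real.exp (c * (t - T')) := by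
      have hnn' : 0 ≤ c * (t - T') := mul_nonneg hc.le (by linarith)
      linarith [Real.add_one_le_exp (c * (t - T'))]
    have hmm := mul_le_mul_of_nonneg_left hexp hNT'.le
    rw [mul_one] at hmm
    linarith
  have hcontra : Ntot x T' ≤ 0 := ge_of_tendsto hNlim hevge
  linarith
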